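/- In the coloring graph Ĝ, every clique meets at most two sink subgraphs: if S is a set of vertices of Ĝ that are pairwise adjacent, then the number of indices j ∈ {1,…,t} with S ∩ V̂_j ≠ ∅ is at most 2. -/

import Mathlib

/-- Vertex type of the coloring graph `Ĝ`: the sink subgraph `V̂_j` consists of
`nj j` regular vertices (`Sum.inl`) and `n - nj j` fictitious vertices (`Sum.inr`). -/
abbrev ColoringVertex (t : ℕ) (nj : Fin t → ℕ) (n : ℕ) : Type :=
  (j : Fin t) × (Fin (nj j) ⊕ Fin (n - nj j))

/-- `cross R x y` holds when `x` is a regular vertex `v_{j,k}`, `y` is a fictitious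
vertex of a different sink subgraph `V̂_{j'}`, and the contamination relation
`R j k j'` holds. -/
def cross {t n : ℕ} {nj : Fin t → ℕ} (R : (j : Fin t) → Fin (nj j) → Fin t → Prop)
    (x y : ColoringVertex t nj n) : Prop :=
  x.1 ≠ y.1 ∧ (∃ k : Fin (nj x.1), x.2 = Sum.inl k ∧ R x.1 k y.1) ∧
    ∃ k' : Fin (n - nj y.1), y.2 = Sum.inr k'

/-- The coloring graph `Ĝ`: two distinct vertices in the same sink subgraph are
always adjacent; a regular vertex `v_{j,k}` is adjacent to every fictitious vertex
of `V̂_{j'}` (for `j' ≠ j`) iff `R j k j'`; there are no other adjacencies. -/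
def coloringGraph (t n : ℕ) (nj : Fin t → ℕ)
    (R : (j : Fin t) → Fin (nj j) → Fin t → Prop) :
    SimpleGraph (ColoringVertex t nj n) where
  Adj x y := x ≠ y ∧ (x.1 = y.1 ∨ cross R x y ∨ cross R y x)
  symm := by
    constructor
    rintro x y ⟨h1, h2⟩
    refine ⟨h1.symm, ?_⟩
    rcases h2 with h | h | h
    · exact Or.inl h.symm
    · exact Or.inr (Or.inr h)
    · exact Or.inr (Or.inl h)
  loopless := ⟨fun x h => h.1 rfl⟩

/-- Every clique of the coloring graph `Ĝ` meets at most two sink subgraphs. -/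
theorem clique_meets_at_most_two_sink_subgraphs
    (t n : ℕ) (ht : 1 ≤ t) (nj : Fin t → ℕ) (hnj : ∀ j, 1 ≤ nj j)
    (hn : n = Finset.univ.sup nj)
    (R : (j : Fin t) → Fin (nj j) → Fin t → Prop)
    (S : Set (ColoringVertex t nj n))
    (hS : (coloringGraph t n nj R).IsClique S) :
    {j : Fin t | ∃ x ∈ S, x.1 = j}.ncard ≤ 2 := by
  by_contra h
  push_neg at h
  obtain ⟨j1, hj1, j2, hj2, j3, hj3, h12, h13, h23⟩ :=
    (Set.two_lt_ncard (Set.toFinite _)).mp h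
  obtain ⟨x, hxS, hx⟩ := hj1
  obtain ⟨y, hyS, hy⟩ := hj2
  obtain ⟨z, hzS, hz⟩ := hj3
  have key : ∀ a b : ColoringVertex t nj n, a ∈ S → b ∈ S → a.1 ≠ b.1 →
      a.2.isLeft ≠ b.2.isLeft := by
    intro a b haS hbS hab
    have hadj := hS haS hbS (fun e => hab (congrArg Sigma.fst e))
    rcases hadj.2 with h' | h' | h'
    · exact absurd h' hab
    · obtain ⟨_, ⟨k, hk, _⟩, ⟨k', hk'⟩⟩ := h'
      rw [hk, hk']; simp
    · obtain ⟨_, ⟨k, hk, _⟩, ⟨k', hk'⟩⟩ := h'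
      rw [hk, hk']; simp
  have hxy : x.1 ≠ y.1 := by rw [hx, hy]; exact h12
  have hxz : x.1 ≠ z.1 := by rw [hx, hz]; exact h13
  have hyz : y.1 ≠ z.1 := by rw [hy, hz]; exact h23
  have k1 := key x y hxS hyS hxy
  have k2 := key x z hxS hzS hxz
  have k3 := key y z hyS hzS hyz
  have tri : ∀ a b c : Bool, a ≠ b → a ≠ c → b ≠ c → False := by decide
  exact tri _ _ _ k1 k2 k3
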